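/- Let α: ℝ → ℝ satisfy α(t) ≥ 1, be even, non-decreasing on [0,∞), submultiplicative, and have polynomial growth α(t) ≤ M(1+|t|)^{2m} for some M > 0, m ∈ ℕ. Then the function K̃(z) = (1/K_m)·(sin(z/(2m))/(z/(2m)))^{2m}, where K_m = ∫_{-∞}^∞ (sin(x/(2m))/(x/(2m)))^{2m} dx, satisfies |K̃(rz)| ≤ C̃_r·e^{r|Im z|}/α(|z|) with C̃_r = (M/K_m)·(1 + 2m/r)^{2m} for all r > 0 and z ∈ ℂ. -/

import Mathlib

open Real
open MeasureTheory

/-- sinc-type factor: sin(w)/w extended by 1 at w = 0 (complex version). -/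
noncomputable def sincFactorC (w : ℂ) : ℂ := if w = 0 then 1 else Complex.sin w / w

/-- real sinc-type factor. -/
noncomputable def sincFactorR (w : ℝ) : ℝ := if w = 0 then 1 else Real.sin w / w

lemma sinh_le_mul_exp {t : ℝ} (ht : 0 ≤ t) : Real.sinh t ≤ t * Real.exp t := by
  rw [Real.sinh_eq]
  have h := Real.add_one_le_exp (-(2*t))
  have ha := Real.exp_pos t
  have key : Real.exp (-(2*t)) * (Real.exp t * Real.exp t) = 1 := by
    rw [← Real.exp_add, ← Real.exp_add]; ring_nf; exact Real.exp_zero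
  have h3 : Real.exp (-t) * Real.exp t = 1 := by
    rw [← Real.exp_add]; ring_nf; exact Real.exp_zero
  have hkey : (-(2*t)+1) * (Real.exp t * Real.exp t) ≤ 1 := by
    calc (-(2*t)+1) * (Real.exp t * Real.exp t)
        ≤ Real.exp (-(2*t)) * (Real.exp t * Real.exp t) := by nlinarith
      _ = 1 := key
  nlinarith [Real.exp_pos (-t)]

lemma cosh_le_exp_abs (t : ℝ) : Real.cosh t ≤ Real.exp |t| := by
  rw [Real.cosh_eq]
  have h1 : Real.exp t ≤ Real.exp |t| := Real.exp_le_exp.2 (le_abs_self t)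
  have h2 : Real.exp (-t) ≤ Real.exp |t| := Real.exp_le_exp.2 (neg_le_abs t)
  linarith

lemma abs_sin_sq (w : ℂ) : ‖Complex.sin w‖ ^ 2
    = Real.sin w.re ^ 2 * Real.cosh w.im ^ 2 + Real.cos w.re ^ 2 * Real.sinh w.im ^ 2 := by
  rw [Complex.sq_norm, Complex.sin_eq]
  simp [Complex.normSq_apply, Complex.add_re, Complex.add_im, Complex.mul_re, Complex.mul_im,
    Complex.sin_ofReal_re, Complex.sin_ofReal_im, Complex.cos_ofReal_re, Complex.cos_ofReal_im,
    Complex.sinh_ofReal_re, Complex.sinh_ofReal_im, Complex.cosh_ofReal_re, Complex.cosh_ofReal_im]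
  ring

lemma abs_sin_le (w : ℂ) : ‖Complex.sin w‖ ≤ Real.exp |w.im| := by
  have hc : Real.cosh w.im ≤ Real.exp |w.im| := cosh_le_exp_abs _
  have hc0 : (0:ℝ) < Real.cosh w.im := Real.cosh_pos w.im
  have hcosh2 : Real.cosh w.im ^ 2 ≤ Real.exp |w.im| ^ 2 := by nlinarith
  have h1 : ‖Complex.sin w‖ ^ 2 ≤ Real.exp |w.im| ^ 2 := by
    rw [abs_sin_sq]
    have hs : Real.sinh w.im ^ 2 ≤ Real.cosh w.im ^ 2 := by
      nlinarith [Real.cosh_sq w.im, sq_nonneg (Real.sinh w.im)]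
    nlinarith [Real.sin_sq_add_cos_sq w.re, sq_nonneg (Real.sin w.re),
      sq_nonneg (Real.cos w.re), sq_nonneg (Real.sinh w.im)]
  exact (pow_le_pow_iff_left₀ (norm_nonneg _) (Real.exp_pos _).le two_ne_zero).1 h1

lemma abs_sin_le_mul (w : ℂ) :
    ‖Complex.sin w‖ ≤ ‖w‖ * Real.exp |w.im| := by
  have hw : ‖w‖ ^ 2 = w.re ^ 2 + w.im ^ 2 := by
    rw [Complex.sq_norm, Complex.normSq_apply]; ring
  have hc : Real.cosh w.im ≤ Real.exp |w.im| := cosh_le_exp_abs _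
  have hc0 : (0:ℝ) < Real.cosh w.im := Real.cosh_pos w.im
  have hcosh2 : Real.cosh w.im ^ 2 ≤ Real.exp |w.im| ^ 2 := by nlinarith
  have hsin : Real.sin w.re ^ 2 ≤ w.re ^ 2 := by
    have h := Real.abs_sin_le_abs (x := w.re)
    nlinarith [sq_abs (Real.sin w.re), sq_abs w.re, abs_nonneg (Real.sin w.re), abs_nonneg w.re]
  have hsh : Real.sinh w.im ^ 2 ≤ w.im ^ 2 * Real.exp |w.im| ^ 2 := by
    have h := sinh_le_mul_exp (abs_nonneg w.im)
    have h2 : |Real.sinh w.im| = Real.sinh |w.im| := Real.abs_sinh w.im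
    have h3 : (0:ℝ) ≤ Real.sinh |w.im| := by
      rw [← Real.sinh_zero]; exact Real.sinh_le_sinh.2 (abs_nonneg _)
    nlinarith [sq_abs (Real.sinh w.im), sq_abs w.im, Real.exp_pos |w.im|, abs_nonneg w.im]
  have hcos : Real.cos w.re ^ 2 ≤ 1 := by
    nlinarith [Real.abs_cos_le_one w.re, abs_nonneg (Real.cos w.re), sq_abs (Real.cos w.re)]
  have t1 : Real.sin w.re ^ 2 * Real.cosh w.im ^ 2 ≤ w.re ^ 2 * Real.exp |w.im| ^ 2 :=
    mul_le_mul hsin hcosh2 (sq_nonneg _) (sq_nonneg _)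
  have t2 : Real.cos w.re ^ 2 * Real.sinh w.im ^ 2 ≤ w.im ^ 2 * Real.exp |w.im| ^ 2 := by
    calc Real.cos w.re ^ 2 * Real.sinh w.im ^ 2 ≤ 1 * (w.im ^ 2 * Real.exp |w.im| ^ 2) :=
          mul_le_mul hcos hsh (sq_nonneg _) one_pos.le
      _ = w.im ^ 2 * Real.exp |w.im| ^ 2 := one_mul _
  have h1 : ‖Complex.sin w‖ ^ 2 ≤ (‖w‖ * Real.exp |w.im|) ^ 2 := by
    rw [abs_sin_sq, mul_pow, hw]
    linarith
  exact (pow_le_pow_iff_left₀ (norm_nonneg _)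
    (mul_nonneg (norm_nonneg _) (Real.exp_pos _).le) two_ne_zero).1 h1

lemma abs_sincC_le (w : ℂ) : ‖sincFactorC w‖ ≤ Real.exp |w.im| := by
  unfold sincFactorC
  split_ifs with h
  · simpa using Real.one_le_exp (abs_nonneg w.im)
  · rw [norm_div, div_le_iff₀ (by simpa [norm_pos_iff] using h)]
    calc ‖Complex.sin w‖ ≤ ‖w‖ * Real.exp |w.im| := abs_sin_le_mul w
      _ = Real.exp |w.im| * ‖w‖ := by ring

lemma abs_sincC_le_div (w : ℂ) (hw : w ≠ 0) :
    ‖sincFactorC w‖ ≤ Real.exp |w.im| / ‖w‖ := by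
  unfold sincFactorC
  rw [if_neg hw, norm_div]
  have hc : 0 < ‖w‖ := by simpa [norm_pos_iff] using hw
  exact (div_le_div_iff_of_pos_right hc).2 (abs_sin_le w)

lemma measurable_sincR : Measurable sincFactorR := by
  unfold sincFactorR
  exact Measurable.ite (measurableSet_eq) measurable_const
    (Real.measurable_sin.div measurable_id)

lemma abs_sincR_le_one (w : ℝ) : |sincFactorR w| ≤ 1 := by
  unfold sincFactorR
  split_ifs with h
  · simp
  · rw [abs_div]
    exact div_le_one_of_le₀ (Real.abs_sin_le_abs) (abs_nonneg _)

lemma abs_sincR_mul_le (w : ℝ) : |sincFactorR w| * |w| ≤ 1 := by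
  unfold sincFactorR
  split_ifs with h
  · simp [h]
  · rw [abs_div, div_mul_cancel₀ _ (abs_ne_zero.2 h)]
    exact Real.abs_sin_le_one w

lemma sincR_pow_nonneg (m : ℕ) (w : ℝ) : 0 ≤ sincFactorR w ^ (2*m) :=
  Even.pow_nonneg ⟨m, by ring⟩ _

lemma sincR_pow_bound (m : ℕ) (hm : 1 ≤ m) (x : ℝ) :
    sincFactorR (x/(2*m)) ^ (2*m) ≤ (1+(2*(m:ℝ))^2) * (1+x^2)⁻¹ := by
  have h2m : (0:ℝ) < 2*m := by positivity
  set s := sincFactorR (x/(2*m)) with hs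
  have hs1 : |s| ≤ 1 := abs_sincR_le_one _
  have hs2 : |s| * |x/(2*(m:ℝ))| ≤ 1 := abs_sincR_mul_le _
  have h3 : |s| * (|x|/(2*(m:ℝ))) ≤ 1 := by rwa [abs_div, abs_of_pos h2m] at hs2
  set u := |s| with hu'
  set v := |x| with hv'
  have hu : 0 ≤ u := abs_nonneg _
  have hv : 0 ≤ v := abs_nonneg _
  have h3' : u*v/(2*(m:ℝ)) ≤ 1 := by rw [mul_div_assoc]; exact h3
  have h4 : u*v ≤ 2*(m:ℝ) := (div_le_one h2m).1 h3'
  have h5 : (u*v)^2 ≤ (2*(m:ℝ))^2 := by nlinarith [mul_nonneg hu hv]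
  have h6 : u^2 ≤ 1 := by nlinarith
  have habs : s ^ (2*m) = u ^ (2*m) := ((Even.pow_abs ⟨m, by ring⟩ s)).symm
  have hle : u ^ (2*m) ≤ u ^ 2 :=
    pow_le_pow_of_le_one hu hs1 (by omega)
  have key : u ^ 2 * (1+x^2) ≤ 1+(2*(m:ℝ))^2 := by
    have hx2 : v^2 = x^2 := sq_abs x
    nlinarith [h5, h6, sq_nonneg u]
  rw [habs, ← div_eq_mul_inv, le_div_iff₀ (by positivity)]
  nlinarith [hle, key, sq_nonneg x, pow_nonneg hu (2*m)]

lemma sincR_pow_integrable (m : ℕ) (hm : 1 ≤ m) :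
    Integrable (fun x : ℝ => sincFactorR (x/(2*m)) ^ (2*m)) := by
  have hmeas : Measurable fun x : ℝ => sincFactorR (x/(2*(m:ℝ))) ^ (2*m) :=
    (measurable_sincR.comp (measurable_id.div_const _)).pow_const _
  apply Integrable.mono' ((integrable_inv_one_add_sq).const_mul (1+(2*(m:ℝ))^2))
    hmeas.aestronglyMeasurable
  filter_upwards with x
  rw [Real.norm_eq_abs, abs_of_nonneg (sincR_pow_nonneg m _)]
  exact sincR_pow_bound m hm x

lemma sincR_pow_integral_pos (m : ℕ) (hm : 1 ≤ m) :
    0 < ∫ x : ℝ, sincFactorR (x/(2*m)) ^ (2*m) := by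
  rw [integral_pos_iff_support_of_nonneg (fun x => sincR_pow_nonneg m _)
    (sincR_pow_integrable m hm)]
  have hsub : Set.Ioo (0:ℝ) 1 ⊆ Function.support fun x => sincFactorR (x/(2*m)) ^ (2*m) := by
    intro x hx
    have h2m : (0:ℝ) < 2*m := by positivity
    have h2m1 : (1:ℝ) ≤ 2*m := by
      have : (1:ℝ) ≤ (m:ℝ) := by exact_mod_cast hm
      linarith
    have hw0 : 0 < x/(2*(m:ℝ)) := div_pos hx.1 h2m
    have hwlt : x/(2*(m:ℝ)) < π := by
      have : x/(2*(m:ℝ)) ≤ x := by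
        rw [div_le_iff₀ h2m]
        nlinarith [hx.1.le]
      linarith [hx.2, Real.pi_gt_three]
    have hsin : 0 < Real.sin (x/(2*(m:ℝ))) := Real.sin_pos_of_pos_of_lt_pi hw0 hwlt
    have : 0 < sincFactorR (x/(2*(m:ℝ))) := by
      unfold sincFactorR
      rw [if_neg hw0.ne']
      positivity
    exact (pow_pos this _).ne'
  calc (0 : ENNReal) < volume (Set.Ioo (0:ℝ) 1) := by simp [Real.volume_Ioo]
    _ ≤ _ := measure_mono hsub

/-- For α ≥ 1, even, non-decreasing on [0,∞), submultiplicative with polynomial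
growth α(t) ≤ M(1+|t|)^{2m}, the Fejér-type kernel
K̃(z) = (1/K_m)(sin(z/2m)/(z/2m))^{2m}, K_m = ∫ (sin(x/2m)/(x/2m))^{2m} dx,
satisfies |K̃(rz)| ≤ (M/K_m)(1+2m/r)^{2m}·e^{r|Im z|}/α(|z|) for r > 0, z ∈ ℂ. -/
theorem stmt_11 (m : ℕ) (hm : 1 ≤ m) (M : ℝ) (hM : 0 < M)
    (α : ℝ → ℝ)
    (hα1 : ∀ t, 1 ≤ α t)
    (hαeven : ∀ t, α (-t) = α t)
    (hαmono : ∀ s t, 0 ≤ s → s ≤ t → α s ≤ α t)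
    (hαsub : ∀ s t, α (s + t) ≤ α s * α t)
    (hgrowth : ∀ t : ℝ, α t ≤ M * (1 + |t|) ^ (2 * m)) :
    ∀ (r : ℝ), 0 < r → ∀ z : ℂ,
      ‖(1 / (∫ x : ℝ, (sincFactorR (x / (2 * m))) ^ (2 * m) : ℂ)) *
          (sincFactorC ((r : ℂ) * z / (2 * m))) ^ (2 * m)‖
        ≤ (M / (∫ x : ℝ, (sincFactorR (x / (2 * m))) ^ (2 * m))) * (1 + 2 * m / r) ^ (2 * m) *
            Real.exp (r * |z.im|) / α (‖z‖) := by
  intro r hr z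
  have hm0 : (0:ℝ) < 2 * m := by positivity
  set K : ℝ := ∫ x : ℝ, (sincFactorR (x / (2 * m))) ^ (2 * m) with hKdef
  have hK : 0 < K := sincR_pow_integral_pos m hm
  -- the complex integral is the cast of the real one
  have hKc : (∫ x : ℝ, ((sincFactorR (x / (2 * m)) : ℂ)) ^ (2 * m)) = (K : ℂ) := by
    rw [hKdef]
    simp_rw [← Complex.ofReal_pow]
    exact integral_ofReal
  set w : ℂ := (r : ℂ) * z / (2 * m) with hwdef
  have hwre : w = ((r / (2*m) : ℝ) : ℂ) * z := by rw [hwdef]; push_cast; ring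
  set c : ℝ := r / (2*m) with hcdef
  have hc : 0 < c := div_pos hr hm0
  have hwim : |w.im| = c * |z.im| := by
    rw [hwre, Complex.im_ofReal_mul, abs_mul, abs_of_pos hc]
  have hwabs : ‖w‖ = c * ‖z‖ := by
    rw [hwre, norm_mul, Complex.norm_real, Real.norm_eq_abs, abs_of_pos hc]
  set S : ℝ := ‖sincFactorC w‖ with hSdef
  have hS0 : 0 ≤ S := norm_nonneg _
  have hα0 : 0 < α (‖z‖) := lt_of_lt_of_le one_pos (hα1 _)
  -- key pointwise bound
  have h1 : S * (1 + ‖z‖) ≤ (1 + 2*m/r) * Real.exp (c * |z.im|) := by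
    rcases le_or_gt (‖z‖) (2*m/r) with hz | hz
    · have hS : S ≤ Real.exp (c * |z.im|) := by rw [← hwim]; exact abs_sincC_le w
      have : 1 + ‖z‖ ≤ 1 + 2*m/r := by linarith
      calc S * (1 + ‖z‖) ≤ Real.exp (c * |z.im|) * (1 + 2*m/r) :=
            mul_le_mul hS this (by positivity) (Real.exp_pos _).le
        _ = (1 + 2*m/r) * Real.exp (c * |z.im|) := by ring
    · have hz0 : 0 < ‖z‖ := lt_trans (by positivity) hz
      have hwne : w ≠ 0 := by
        rw [hwre]
        apply mul_ne_zero
        · exact_mod_cast (ne_of_gt hc)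
        · exact norm_ne_zero_iff.1 hz0.ne'
      have hS : S ≤ Real.exp (c * |z.im|) / (c * ‖z‖) := by
        rw [← hwim, ← hwabs]; exact abs_sincC_le_div w hwne
      have hcz : 0 < c * ‖z‖ := mul_pos hc hz0
      have step : S * (1 + ‖z‖)
          ≤ Real.exp (c * |z.im|) / (c * ‖z‖) * (1 + ‖z‖) :=
        mul_le_mul_of_nonneg_right hS (by positivity)
      have expand : Real.exp (c * |z.im|) / (c * ‖z‖) * (1 + ‖z‖)
          = Real.exp (c * |z.im|) * (1/(c * ‖z‖) + 1/c) := by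
        field_simp
      have b1 : 1/(c * ‖z‖) ≤ 1 := by
        rw [div_le_one hcz]
        have h2 : 2*(m:ℝ) < ‖z‖ * r := (div_lt_iff₀ hr).1 hz
        rw [hcdef, div_mul_eq_mul_div, le_div_iff₀ hm0, one_mul]
        nlinarith
      have b2 : 1/c = 2*m/r := by rw [hcdef, one_div_div]
      have final : Real.exp (c * |z.im|) * (1/(c * ‖z‖) + 1/c)
          ≤ (1 + 2*m/r) * Real.exp (c * |z.im|) := by
        rw [b2]
        have := Real.exp_pos (c * |z.im|)
        nlinarith [b1]
      calc S * (1 + ‖z‖)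
          ≤ Real.exp (c * |z.im|) / (c * ‖z‖) * (1 + ‖z‖) := step
        _ = Real.exp (c * |z.im|) * (1/(c * ‖z‖) + 1/c) := expand
        _ ≤ (1 + 2*m/r) * Real.exp (c * |z.im|) := final
  -- core bound
  have core : S ^ (2*m) * α (‖z‖)
      ≤ M * ((1 + 2*m/r) ^ (2*m) * Real.exp (r * |z.im|)) := by
    have hg : α (‖z‖) ≤ M * (1 + ‖z‖) ^ (2*m) := by
      have := hgrowth (‖z‖)
      rwa [abs_of_nonneg (norm_nonneg z)] at this
    have p1 : S ^ (2*m) * α (‖z‖) ≤ M * (S * (1 + ‖z‖)) ^ (2*m) := by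
      rw [mul_pow]
      calc S ^ (2*m) * α (‖z‖) ≤ S ^ (2*m) * (M * (1 + ‖z‖) ^ (2*m)) :=
            mul_le_mul_of_nonneg_left hg (pow_nonneg hS0 _)
        _ = M * (S ^ (2*m) * (1 + ‖z‖) ^ (2*m)) := by ring
    have p2 : (S * (1 + ‖z‖)) ^ (2*m)
        ≤ ((1 + 2*m/r) * Real.exp (c * |z.im|)) ^ (2*m) :=
      pow_le_pow_left₀ (by positivity) h1 _
    have p3 : ((1 + 2*m/r) * Real.exp (c * |z.im|)) ^ (2*m)
        = (1 + 2*m/r) ^ (2*m) * Real.exp (r * |z.im|) := by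
      rw [mul_pow, ← Real.exp_nat_mul]
      congr 2
      rw [hcdef]
      field_simp
      push_cast; ring
    calc S ^ (2*m) * α (‖z‖) ≤ M * (S * (1 + ‖z‖)) ^ (2*m) := p1
      _ ≤ M * ((1 + 2*m/r) * Real.exp (c * |z.im|)) ^ (2*m) := by
          exact mul_le_mul_of_nonneg_left p2 hM.le
      _ = M * ((1 + 2*m/r) ^ (2*m) * Real.exp (r * |z.im|)) := by rw [p3]
  -- assemble
  have habs : ‖(1 / (K:ℂ)) * (sincFactorC w) ^ (2*m)‖ = (1/K) * S ^ (2*m) := by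
    rw [norm_mul, norm_pow, norm_div, norm_one, Complex.norm_real, Real.norm_eq_abs, abs_of_pos hK, hSdef]
  rw [hKc, habs]
  rw [le_div_iff₀ hα0]
  calc (1/K) * S ^ (2*m) * α (‖z‖)
      = (S ^ (2*m) * α (‖z‖)) / K := by ring
    _ ≤ (M * ((1 + 2*m/r) ^ (2*m) * Real.exp (r * |z.im|))) / K := by
        exact div_le_div_of_nonneg_right core hK.le |>.trans_eq rfl
    _ = M / K * (1 + 2*m/r) ^ (2*m) * Real.exp (r * |z.im|) := by ring
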